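/- Let p be a prime, let G be a countable, locally finite group of characteristic p, and let V be a normal p-subgroup of G. Let X be the set of all x ∈ C_G(V) such that [O_p(G), x] ≤ V, where [O_p(G), x] denotes the subgroup generated by the commutators q⁻¹x⁻¹qx with q ∈ O_p(G). Then X is a normal subgroup of G and X is a p-group. -/

import Mathlib

/-- A group is locally finite if every finitely generated subgroup is finite. -/
def LocallyFiniteGroup (G : Type*) [Group G] : Prop :=
  ∀ s : Finset G, ((Subgroup.closure (s : Set G) : Subgroup G) : Set G).Finite

/-- Lemma 6.5(c). Let `G` be a countable, locally finite group of
characteristic `p` (with `Op = O_p(G)` its largest normal `p`-subgroup and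
`C_G(Op) ≤ Op`), and let `V` be a normal `p`-subgroup of `G`.  Then the set
`X = {x ∈ C_G(V) | [O_p(G), x] ≤ V}` is a normal `p`-subgroup of `G`. -/
theorem centralizer_commutator_le_is_normal_pSubgroup
    {G : Type*} [Group G] (p : ℕ) (hp : p.Prime)
    [Countable G] (hlf : LocallyFiniteGroup G)
    (Op : Subgroup G)
    (hOp : IsGreatest {N : Subgroup G | N.Normal ∧ IsPGroup p ↥N} Op)
    (hchar : Subgroup.centralizer (Op : Set G) ≤ Op)
    (V : Subgroup G) (hVnormal : V.Normal) (hVp : IsPGroup p ↥V) :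
    ∃ X : Subgroup G,
      (X : Set G) = {x : G | x ∈ Subgroup.centralizer (V : Set G) ∧
        Subgroup.closure {c : G | ∃ q ∈ Op, c = q⁻¹ * x⁻¹ * q * x} ≤ V} ∧
      X.Normal ∧ IsPGroup p ↥X := by
  -- the closure condition is equivalent to a pointwise condition
  have hcond : ∀ x : G,
      (Subgroup.closure {c : G | ∃ q ∈ Op, c = q⁻¹ * x⁻¹ * q * x} ≤ V) ↔
      ∀ q ∈ Op, q⁻¹ * x⁻¹ * q * x ∈ V := by
    intro x
    rw [Subgroup.closure_le]
    constructor
    · intro h q hq; exact h ⟨q, hq, rfl⟩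
    · rintro h c ⟨q, hq, rfl⟩; exact h q hq
  -- define X as a subgroup
  refine ⟨{
    carrier := {x : G | x ∈ Subgroup.centralizer (V : Set G) ∧
      ∀ q ∈ Op, q⁻¹ * x⁻¹ * q * x ∈ V}
    one_mem' := ⟨Subgroup.one_mem _, fun q hq => by
      simpa using V.one_mem⟩
    mul_mem' := by
      rintro x y ⟨hxc, hx⟩ ⟨hyc, hy⟩
      refine ⟨Subgroup.mul_mem _ hxc hyc, fun q hq => ?_⟩
      have h1 : q⁻¹ * (x * y)⁻¹ * q * (x * y)
          = (q⁻¹ * y⁻¹ * q * y) * (y⁻¹ * (q⁻¹ * x⁻¹ * q * x) * y) := by group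
      rw [h1]
      have h2 : y⁻¹ * (q⁻¹ * x⁻¹ * q * x) * y ∈ V := by
        have := hVnormal.conj_mem _ (hx q hq) y⁻¹
        simpa using this
      exact V.mul_mem (hy q hq) h2
    inv_mem' := by
      rintro x ⟨hxc, hx⟩
      refine ⟨Subgroup.inv_mem _ hxc, fun q hq => ?_⟩
      have h1 : q⁻¹ * (x⁻¹)⁻¹ * q * x⁻¹ = (x * (q⁻¹ * x⁻¹ * q * x) * x⁻¹)⁻¹ := by group
      rw [h1]
      exact V.inv_mem (hVnormal.conj_mem _ (hx q hq) x) }, ?_, ?_, ?_⟩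
  · ext x
    simp only [Subgroup.coe_set_mk, Set.mem_setOf_eq, hcond]
    exact Iff.rfl
  · constructor
    rintro x ⟨hxc, hx⟩ g
    constructor
    · -- g * x * g⁻¹ centralizes V
      rw [Subgroup.mem_centralizer_iff]
      intro v hv
      have hv' : g⁻¹ * v * g ∈ V := by
        have := hVnormal.conj_mem _ hv g⁻¹
        simpa using this
      have h := Subgroup.mem_centralizer_iff.mp hxc _ hv'
      calc v * (g * x * g⁻¹) = g * ((g⁻¹ * v * g) * x) * g⁻¹ := by group
        _ = g * (x * (g⁻¹ * v * g)) * g⁻¹ := by rw [h]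
        _ = (g * x * g⁻¹) * v := by group
    · intro q hq
      have hq' : g⁻¹ * q * g ∈ Op := by
        have := hOp.1.1.conj_mem _ hq g⁻¹
        simpa using this
      have h1 : q⁻¹ * (g * x * g⁻¹)⁻¹ * q * (g * x * g⁻¹)
          = g * ((g⁻¹ * q * g)⁻¹ * x⁻¹ * (g⁻¹ * q * g) * x) * g⁻¹ := by group
      rw [h1]
      exact hVnormal.conj_mem _ (hx _ hq') g
  · -- X is a p-group
    rintro ⟨x, hx⟩
    obtain ⟨hxc, hxcomm⟩ := hx
    -- x has finite order
    have hfin : IsOfFinOrder x := by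
      have h := hlf {x}
      rw [Finset.coe_singleton] at h
      haveI : Finite (Subgroup.closure ({x} : Set G)) := h.to_subtype
      have hx' : IsOfFinOrder (⟨x, Subgroup.subset_closure rfl⟩ :
          Subgroup.closure ({x} : Set G)) := isOfFinOrder_of_finite _
      exact (Subtype.coe_injective.isOfFinOrder_iff
        (f := (Subgroup.closure ({x} : Set G)).subtype)).mpr hx'
    set n := orderOf x with hn
    have hn0 : n ≠ 0 := hfin.orderOf_pos.ne'
    set k := n.factorization p with hk
    set m := n / p ^ k with hm
    set y := x ^ (p ^ k) with hy
    have hym : y ^ m = 1 := by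
      rw [hy, ← pow_mul, Nat.ordProj_mul_ordCompl_eq_self n p, hn, pow_orderOf_eq_one]
    have hmp : Nat.Coprime p m := Nat.coprime_ordCompl hp hn0
    -- y centralizes V and has commutators with Op in V, since x does
    have hycomm : ∀ q ∈ Op, q⁻¹ * y⁻¹ * q * y ∈ V := by
      intro q hq
      -- commutator power formula: q⁻¹ * (x^j)⁻¹ * q * x^j = (q⁻¹x⁻¹qx)^j
      have key : ∀ j : ℕ, q⁻¹ * (x ^ j)⁻¹ * q * x ^ j = (q⁻¹ * x⁻¹ * q * x) ^ j := by
        intro j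
        induction j with
        | zero => group
        | succ j ih =>
          have hvj : q⁻¹ * (x ^ j)⁻¹ * q * x ^ j ∈ V := by
            rw [ih]; exact V.pow_mem (hxcomm q hq) j
          have hc : x⁻¹ * (q⁻¹ * (x ^ j)⁻¹ * q * x ^ j) * x
              = q⁻¹ * (x ^ j)⁻¹ * q * x ^ j := by
            have h := Subgroup.mem_centralizer_iff.mp hxc _ hvj
            rw [mul_assoc, h, ← mul_assoc, inv_mul_cancel, one_mul]
          calc q⁻¹ * (x ^ (j + 1))⁻¹ * q * x ^ (j + 1)
              = (q⁻¹ * x⁻¹ * q * x) * (x⁻¹ * (q⁻¹ * (x ^ j)⁻¹ * q * x ^ j) * x) := by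
                rw [pow_succ]; group
            _ = (q⁻¹ * x⁻¹ * q * x) * (q⁻¹ * (x ^ j)⁻¹ * q * x ^ j) := by rw [hc]
            _ = (q⁻¹ * x⁻¹ * q * x) ^ (j + 1) := by rw [ih, pow_succ']
      rw [hy, key]
      exact V.pow_mem (hxcomm q hq) _
    have hyc : y ∈ Subgroup.centralizer (V : Set G) :=
      Subgroup.pow_mem _ hxc _
    -- the commutators of y with Op are trivial
    have hyone : ∀ q ∈ Op, q⁻¹ * y⁻¹ * q * y = 1 := by
      intro q hq
      have hv : q⁻¹ * y⁻¹ * q * y ∈ V := hycomm q hq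
      -- power formula for y
      have key : ∀ j : ℕ, q⁻¹ * (y ^ j)⁻¹ * q * y ^ j = (q⁻¹ * y⁻¹ * q * y) ^ j := by
        intro j
        induction j with
        | zero => group
        | succ j ih =>
          have hvj : q⁻¹ * (y ^ j)⁻¹ * q * y ^ j ∈ V := by
            rw [ih]; exact V.pow_mem hv j
          have hc : y⁻¹ * (q⁻¹ * (y ^ j)⁻¹ * q * y ^ j) * y
              = q⁻¹ * (y ^ j)⁻¹ * q * y ^ j := by
            have h := Subgroup.mem_centralizer_iff.mp hyc _ hvj
            rw [mul_assoc, h, ← mul_assoc, inv_mul_cancel, one_mul]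
          calc q⁻¹ * (y ^ (j + 1))⁻¹ * q * y ^ (j + 1)
              = (q⁻¹ * y⁻¹ * q * y) * (y⁻¹ * (q⁻¹ * (y ^ j)⁻¹ * q * y ^ j) * y) := by
                rw [pow_succ]; group
            _ = (q⁻¹ * y⁻¹ * q * y) * (q⁻¹ * (y ^ j)⁻¹ * q * y ^ j) := by rw [hc]
            _ = (q⁻¹ * y⁻¹ * q * y) ^ (j + 1) := by rw [ih, pow_succ']
      -- (q⁻¹y⁻¹qy)^m = 1
      have hvm : (q⁻¹ * y⁻¹ * q * y) ^ m = 1 := by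
        rw [← key, hym]; group
      -- but q⁻¹y⁻¹qy lies in the p-group V
      obtain ⟨a, ha⟩ := hVp ⟨_, hv⟩
      have ha' : (q⁻¹ * y⁻¹ * q * y) ^ (p ^ a) = 1 := by
        have := congrArg (Subtype.val) ha
        simpa using this
      have hd1 : orderOf (q⁻¹ * y⁻¹ * q * y) ∣ m := orderOf_dvd_of_pow_eq_one hvm
      have hd2 : orderOf (q⁻¹ * y⁻¹ * q * y) ∣ p ^ a := orderOf_dvd_of_pow_eq_one ha'
      have hcop : Nat.Coprime m (p ^ a) := (hmp.symm).pow_right a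
      have : orderOf (q⁻¹ * y⁻¹ * q * y) = 1 := by
        have hc2 : Nat.Coprime (orderOf (q⁻¹ * y⁻¹ * q * y)) (p ^ a) :=
          Nat.Coprime.coprime_dvd_left hd1 hcop
        exact Nat.dvd_one.mp (hc2 ▸ Nat.dvd_gcd dvd_rfl hd2)
      exact orderOf_eq_one_iff.mp this
    -- hence y centralizes Op, so y ∈ Op
    have hyOp : y ∈ Op := by
      apply hchar
      rw [Subgroup.mem_centralizer_iff]
      intro q hq
      calc q * y = (y * q) * (q⁻¹ * y⁻¹ * q * y) := by group
        _ = y * q := by rw [hyone q hq, mul_one]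
    -- y is a p-element of p'-order, hence trivial
    obtain ⟨a, ha⟩ := hOp.1.2 ⟨y, hyOp⟩
    have ha' : y ^ (p ^ a) = 1 := by
      have := congrArg (Subtype.val) ha
      simpa using this
    have hy1 : y = 1 := by
      have hd1 : orderOf y ∣ m := orderOf_dvd_of_pow_eq_one hym
      have hd2 : orderOf y ∣ p ^ a := orderOf_dvd_of_pow_eq_one ha'
      have hcop : Nat.Coprime m (p ^ a) := (hmp.symm).pow_right a
      have hc2 : Nat.Coprime (orderOf y) (p ^ a) :=
        Nat.Coprime.coprime_dvd_left hd1 hcop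
      have : orderOf y = 1 := Nat.dvd_one.mp (hc2 ▸ Nat.dvd_gcd dvd_rfl hd2)
      exact orderOf_eq_one_iff.mp this
    -- so x^(p^k) = 1, giving the p-group property
    refine ⟨k, ?_⟩
    ext
    simpa using hy1
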